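/- Let η₀ : ℝⁿ → [0,∞) be a Schwartz function with ‖η₀‖_{L¹} = 1 and Fourier transform supported in the unit ball, and let 𝒯 : ℝⁿ → ℝⁿ be an invertible linear map. For r > 0 and j ∈ ℤⁿ set c_j := r𝒯^{−1}(j) and χ_j(x) := η₀(𝒯(x − c_j)/r). Then for every N ∈ ℕ there is a constant C_N (depending on N, n, η₀ and 𝒯 but not on r) such that for every g ∈ L²(ℝⁿ): Σ_{j∈ℤⁿ} ‖⟨(x − c_j)/r⟩^{N}·χ_j·g‖²_{L²(ℝⁿ)} ≤ C_N·‖g‖²_{L²(ℝⁿ)}. -/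

import Mathlib

open MeasureTheory
open scoped ENNReal BigOperators

noncomputable section

namespace PaperStmt

/-- `ℝ^n` as a Euclidean space. -/
abbrev Rn (n : ℕ) := EuclideanSpace ℝ (Fin n)

/-- Reinterpret a plain function `Fin n → ℝ` as a point of `ℝ^n`. -/
def toE {n : ℕ} (v : Fin n → ℝ) : Rn n := (EuclideanSpace.equiv (Fin n) ℝ).symm v

/-- The point of `ℝ^n` with integer coordinates `z`. -/
def intVec {n : ℕ} (z : Fin n → ℤ) : Rn n := toE fun i => (z i : ℝ)

/-- The Japanese bracket `⟨s⟩ = (1 + s²)^{1/2}`. -/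
def jap (s : ℝ) : ℝ := Real.sqrt (1 + s ^ 2)

lemma jap_le_one_add {s : ℝ} (hs : 0 ≤ s) : jap s ≤ 1 + s := by
  have h : (1:ℝ) + s ^ 2 ≤ (1 + s) ^ 2 := by nlinarith
  calc jap s ≤ Real.sqrt ((1+s)^2) := Real.sqrt_le_sqrt h
    _ = 1 + s := Real.sqrt_sq (by linarith)

lemma schwartz_bound (n K : ℕ) (η : SchwartzMap (Rn n) ℝ) :
    ∃ B : ℝ, 0 < B ∧ ∀ u : Rn n, (1 + ‖u‖) ^ K * ‖η u‖ ≤ B := by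
  obtain ⟨C0, hC0p, hC0⟩ := η.decay 0 0
  obtain ⟨CK, hCKp, hCK⟩ := η.decay K 0
  refine ⟨2^K * (|C0| + |CK|) + 1, by positivity, fun u => ?_⟩
  have h0 := hC0 u; have hK := hCK u
  rw [norm_iteratedFDeriv_zero] at h0 hK
  simp only [pow_zero, one_mul] at h0
  have hnn : (0:ℝ) ≤ ‖u‖ := norm_nonneg u
  have hb : (1 + ‖u‖) ^ K ≤ 2^K * (1 + ‖u‖^K) := by
    calc (1 + ‖u‖)^K ≤ (2 * max 1 ‖u‖)^K := by
          apply pow_le_pow_left₀ (by linarith)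
          have h1 := le_max_left (1:ℝ) ‖u‖; have h2 := le_max_right (1:ℝ) ‖u‖; linarith
      _ = 2^K * (max 1 ‖u‖)^K := mul_pow 2 _ K
      _ ≤ 2^K * (1 + ‖u‖^K) := by
          apply mul_le_mul_of_nonneg_left _ (by positivity)
          rcases max_cases (1:ℝ) ‖u‖ with ⟨h,_⟩|⟨h,_⟩ <;> rw [h]
          · have hp : (0:ℝ) ≤ ‖u‖^K := by positivity
            have : (1:ℝ)^K = 1 := one_pow K
            rw [this]; linarith
          · nlinarith [pow_nonneg hnn K, pow_le_pow_left₀ hnn (le_refl ‖u‖) K]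
  calc (1 + ‖u‖)^K * ‖η u‖ ≤ 2^K * (1 + ‖u‖^K) * ‖η u‖ :=
        mul_le_mul_of_nonneg_right hb (norm_nonneg _)
    _ = 2^K * (‖η u‖ + ‖u‖^K * ‖η u‖) := by ring
    _ ≤ 2^K * (|C0| + |CK|) := by
        apply mul_le_mul_of_nonneg_left _ (by positivity)
        have a1 := le_abs_self C0; have a2 := le_abs_self CK; linarith
    _ ≤ _ := by linarith

lemma tsum_pi_prod : ∀ (n : ℕ) (g : Fin n → ℤ → ℝ≥0∞),
    ∑' j : Fin n → ℤ, ∏ i, g i (j i) = ∏ i, ∑' m : ℤ, g i m := by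
  intro n
  induction n with
  | zero =>
    intro g
    simp only [Finset.univ_eq_empty, Finset.prod_empty]
    rw [tsum_eq_single (default : Fin 0 → ℤ) (fun b hb => (hb (Subsingleton.elim b default)).elim)]
  | succ n ih =>
    intro g
    rw [← ((Fin.consEquiv (fun _ : Fin (n+1) => ℤ)).tsum_eq (fun j : Fin (n+1) → ℤ => ∏ i, g i (j i))),
      ENNReal.tsum_prod']
    have hc : ∀ (a : ℤ) (b : Fin n → ℤ),
        (∏ i, g i ((Fin.consEquiv (fun _ : Fin (n+1) => ℤ)) (a, b) i))
          = g 0 a * ∏ i : Fin n, g i.succ (b i) := by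
      intro a b
      rw [Fin.prod_univ_succ]
      simp [Fin.consEquiv]
    simp only [hc]
    rw [Fin.prod_univ_succ]
    calc ∑' a : ℤ, ∑' b : Fin n → ℤ, g 0 a * ∏ i : Fin n, g i.succ (b i)
        = ∑' a : ℤ, g 0 a * ∑' b : Fin n → ℤ, ∏ i : Fin n, g i.succ (b i) := by
          congr 1; funext a; exact ENNReal.tsum_mul_left
      _ = (∑' a : ℤ, g 0 a) * ∑' b : Fin n → ℤ, ∏ i : Fin n, g i.succ (b i) :=
          ENNReal.tsum_mul_right
      _ = _ := by rw [ih (fun i => g i.succ)]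

def S2 : ℝ≥0∞ := ∑' k : ℤ, ENNReal.ofReal (1 / (1 + (k:ℝ)^2))

lemma summable_aux : Summable (fun k : ℤ => 1 / (1 + (k:ℝ)^2)) := by
  have hnat : Summable (fun k : ℕ => 1 / (1 + (k:ℝ)^2)) := by
    have h1 : Summable (fun k : ℕ => 1/((k:ℝ)^2)) := by
      rw [Real.summable_one_div_nat_pow]; norm_num
    have h2 : Summable (fun k : ℕ => 1/(((k:ℝ)+1)^2)) := by
      have := (summable_nat_add_iff 1).2 h1
      refine this.congr fun k => ?_
      push_cast; ring_nf
    refine Summable.of_nonneg_of_le (fun k => by positivity) (fun k => ?_) (h2.mul_left 2)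
    rw [mul_one_div, div_le_div_iff₀ (by positivity) (by positivity)]
    nlinarith [sq_nonneg ((k:ℝ) - 1)]
  apply Summable.of_nat_of_neg
  · refine hnat.congr fun k => by push_cast; ring_nf
  · refine hnat.congr fun k => by push_cast; ring_nf

lemma S2_ne_top : S2 ≠ ∞ := by
  rw [S2, ← ENNReal.ofReal_tsum_of_nonneg (fun k => by positivity) summable_aux]
  exact ENNReal.ofReal_ne_top

lemma one_dim_bound (t : ℝ) :
    ∑' m : ℤ, ENNReal.ofReal (1 / (1 + (t - (m:ℝ))^2)) ≤ 2 * S2 := by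
  set m₀ : ℤ := round t with hm₀
  have hr2 : (t - (m₀:ℝ))^2 ≤ 1/4 := by
    have h := abs_le.mp (abs_sub_round t)
    nlinarith [h.1, h.2]
  have hle : ∀ m : ℤ, (1:ℝ)/(1+(t-(m:ℝ))^2) ≤ 2 * (1/(1+((m - m₀ : ℤ):ℝ)^2)) := by
    intro m
    have hc : ((m - m₀ : ℤ):ℝ) = (m:ℝ) - (m₀:ℝ) := by push_cast; ring
    rw [hc, mul_one_div, div_le_div_iff₀ (by positivity) (by positivity)]
    nlinarith [sq_nonneg ((t - (m₀:ℝ)) + (t - (m:ℝ)))]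
  calc ∑' m : ℤ, ENNReal.ofReal (1/(1+(t-(m:ℝ))^2))
      ≤ ∑' m : ℤ, ENNReal.ofReal (2 * (1/(1+((m - m₀:ℤ):ℝ)^2))) :=
        ENNReal.tsum_le_tsum (fun m => ENNReal.ofReal_le_ofReal (hle m))
    _ = ∑' m : ℤ, 2 * ENNReal.ofReal (1/(1+((m - m₀:ℤ):ℝ)^2)) := by
        congr 1; funext m
        rw [ENNReal.ofReal_mul (by norm_num)]; norm_num
    _ = 2 * ∑' m : ℤ, ENNReal.ofReal (1/(1+((m - m₀:ℤ):ℝ)^2)) := ENNReal.tsum_mul_left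
    _ ≤ 2 * S2 := by
        apply mul_le_mul_right
        rw [show (fun m : ℤ => ENNReal.ofReal (1/(1+((m - m₀:ℤ):ℝ)^2)))
            = fun m : ℤ => ENNReal.ofReal (1/(1+(((Equiv.subRight m₀) m : ℤ):ℝ)^2)) from rfl]
        rw [(Equiv.subRight m₀).tsum_eq (fun k : ℤ => ENNReal.ofReal (1/(1+(k:ℝ)^2)))]
        exact le_of_eq rfl

lemma eLpNorm_two_sq {α : Type*} [MeasurableSpace α] (μ : Measure α) (f : α → ℂ) :
    eLpNorm f 2 μ ^ 2 = ∫⁻ x, (‖f x‖₊ : ℝ≥0∞) ^ 2 ∂μ := by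
  rw [eLpNorm_eq_lintegral_rpow_enorm_toReal two_ne_zero ENNReal.ofNat_ne_top]
  rw [ENNReal.toReal_ofNat]
  rw [← ENNReal.rpow_natCast _ 2, ← ENNReal.rpow_mul]
  norm_num
  rfl


set_option synthInstance.maxHeartbeats 1000000 in
set_option maxHeartbeats 2000000 in
/-- the weighted almost-orthogonality estimate for the family of
bump functions `χ_j(x) = η₀(𝒯(x - c_j)/r)` adapted to the cubes of the oblique
lattice `r 𝒯⁻¹(ℤⁿ)`, built from a Schwartz profile `η₀ ≥ 0` with `‖η₀‖_{L¹} = 1`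
whose Fourier transform is supported in the unit ball:
`∑_j ‖⟨(x-c_j)/r⟩^N χ_j g‖²_{L²} ≤ C_N ‖g‖²_{L²}`. -/
theorem statement_13 (n : ℕ) (hn : 1 ≤ n) (η₀ : SchwartzMap (Rn n) ℝ)
    (hpos : ∀ x, 0 ≤ η₀ x)
    (hL1 : eLpNorm (fun x => η₀ x) 1 volume = 1)
    (hfour : Function.support
        (FourierTransform.fourier (fun x : Rn n => (η₀ x : ℂ))) ⊆
      Metric.closedBall 0 1)
    (T : Rn n ≃ₗ[ℝ] Rn n) (N : ℕ) :
    ∃ C : ℝ, 0 < C ∧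
      ∀ r : ℝ, 0 < r → ∀ g : Rn n → ℂ, MemLp g 2 volume →
        ∑' j : Fin n → ℤ,
            eLpNorm
                (fun x =>
                  ((jap (‖x - r • T.symm (intVec j)‖ / r) ^ N *
                      η₀ (r⁻¹ • T (x - r • T.symm (intVec j))) : ℝ) : ℂ) * g x) 2
                volume ^ 2 ≤
          ENNReal.ofReal C * eLpNorm g 2 volume ^ 2 := by
  classical
  obtain ⟨M, hM0, hM⟩ : ∃ M : ℝ, 0 ≤ M ∧ ∀ u : Rn n, ‖T.symm u‖ ≤ M * ‖u‖ := by
    let L : Rn n →L[ℝ] Rn n :=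
      { toLinearMap := (T.symm : Rn n →ₗ[ℝ] Rn n)
        cont := (T.symm : Rn n →ₗ[ℝ] Rn n).continuous_of_finiteDimensional }
    refine ⟨‖L‖, norm_nonneg L, fun u => ?_⟩
    exact L.le_opNorm u
  obtain ⟨B, hB0, hB⟩ := schwartz_bound n (N + (n+1)) η₀
  set A : ℝ := (1 + M)^N * B with hA
  have hA0 : 0 < A := by positivity
  have key : ∀ u : Rn n, jap ‖T.symm u‖ ^ N * η₀ u * (1 + ‖u‖)^(n+1) ≤ A := by
    intro u
    have hnn : (0:ℝ) ≤ ‖u‖ := norm_nonneg u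
    have h1 : jap ‖T.symm u‖ ≤ (1 + M) * (1 + ‖u‖) := by
      have ha := jap_le_one_add (norm_nonneg (T.symm u))
      have h2 := hM u
      nlinarith
    have hjn : 0 ≤ jap ‖T.symm u‖ := Real.sqrt_nonneg _
    have hη := hpos u
    have hBu := hB u
    rw [Real.norm_eq_abs, abs_of_nonneg hη] at hBu
    calc jap ‖T.symm u‖ ^ N * η₀ u * (1+‖u‖)^(n+1)
        ≤ ((1+M)*(1+‖u‖))^N * η₀ u * (1+‖u‖)^(n+1) := by
          apply mul_le_mul_of_nonneg_right _ (by positivity)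
          exact mul_le_mul_of_nonneg_right (pow_le_pow_left₀ hjn h1 N) hη
      _ = (1+M)^N * ((1+‖u‖)^(N + (n+1)) * η₀ u) := by
          rw [mul_pow, pow_add]; ring
      _ ≤ (1+M)^N * B := mul_le_mul_of_nonneg_left hBu (by positivity)
      _ = A := rfl
  have key2 : ∀ u : Rn n, (jap ‖T.symm u‖ ^ N * η₀ u)^2
      ≤ A^2 * ∏ i : Fin n, (1 / (1 + (u i)^2)) := by
    intro u
    have hnn : (0:ℝ) ≤ ‖u‖ := norm_nonneg u
    set W : ℝ := jap ‖T.symm u‖ ^ N * η₀ u with hW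
    have hW0 : 0 ≤ W := mul_nonneg (pow_nonneg (Real.sqrt_nonneg _) _) (hpos u)
    have hcoord : ∀ i, (u i)^2 ≤ ‖u‖^2 := by
      intro i
      have hs : ‖u‖^2 = ∑ i', (u i')^2 := by
        rw [EuclideanSpace.norm_eq, Real.sq_sqrt (Finset.sum_nonneg fun _ _ => by positivity)]
        simp [Real.norm_eq_abs, sq_abs]
      rw [hs]
      exact Finset.single_le_sum (fun i' _ => sq_nonneg (u i')) (Finset.mem_univ i)
    set P : ℝ := ∏ i : Fin n, (1 + (u i)^2) with hPdef
    have hP0 : (0:ℝ) < P := Finset.prod_pos (fun i _ => by positivity)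
    have hProd : P ≤ ((1+‖u‖)^(n+1))^2 := by
      calc P ≤ ∏ _i : Fin n, (1+‖u‖)^2 := by
            apply Finset.prod_le_prod (fun i _ => by positivity) (fun i _ => ?_)
            have := hcoord i
            nlinarith
        _ = ((1+‖u‖)^2)^n := by
            rw [Finset.prod_const, Finset.card_univ, Fintype.card_fin]
        _ ≤ ((1+‖u‖)^2)^(n+1) := pow_le_pow_right₀ (by nlinarith) (Nat.le_succ n)
        _ = ((1+‖u‖)^(n+1))^2 := by
            rw [← pow_mul, ← pow_mul, mul_comm]
    have hmain : W^2 * P ≤ A^2 := by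
      calc W^2 * P ≤ W^2 * ((1+‖u‖)^(n+1))^2 :=
            mul_le_mul_of_nonneg_left hProd (by positivity)
        _ = (W * (1+‖u‖)^(n+1))^2 := by ring
        _ ≤ A^2 := by
            apply pow_le_pow_left₀ (mul_nonneg hW0 (by positivity)) (key u)
    have hfinal : W^2 ≤ A^2 / P := (le_div_iff₀ hP0).2 hmain
    calc W^2 ≤ A^2 / P := hfinal
      _ = A^2 * ∏ i : Fin n, (1 / (1 + (u i)^2)) := by
          rw [div_eq_mul_inv, hPdef, ← Finset.prod_inv_distrib]
          simp [one_div]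
  set Z : ℝ≥0∞ := ENNReal.ofReal (A^2) * (2 * S2)^n with hZ
  have hZtop : Z ≠ ∞ := by
    apply ENNReal.mul_ne_top ENNReal.ofReal_ne_top
    exact ENNReal.pow_ne_top (ENNReal.mul_ne_top (by norm_num) S2_ne_top)
  set C : ℝ := max 1 Z.toReal with hC
  have hZC : Z ≤ ENNReal.ofReal C := by
    conv_lhs => rw [← ENNReal.ofReal_toReal hZtop]
    exact ENNReal.ofReal_le_ofReal (le_max_right _ _)
  refine ⟨C, lt_of_lt_of_le one_pos (le_max_left _ _), ?_⟩
  intro r hr g hg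
  set W : (Fin n → ℤ) → Rn n → ℝ := fun j x =>
    jap (‖x - r • T.symm (intVec j)‖ / r) ^ N *
      η₀ (r⁻¹ • T (x - r • T.symm (intVec j))) with hWdef
  have hW0 : ∀ j x, 0 ≤ W j x :=
    fun j x => mul_nonneg (pow_nonneg (Real.sqrt_nonneg _) _) (hpos _)
  have hTc : Continuous fun x : Rn n => T x :=
    T.toLinearMap.continuous_of_finiteDimensional
  have hWc : ∀ j, Continuous (W j) := by
    intro j
    apply Continuous.mul
    · apply Continuous.pow
      have h1 : Continuous fun x : Rn n => ‖x - r • T.symm (intVec j)‖ / r :=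
        ((continuous_id.sub continuous_const).norm).div_const r
      have hjapc : Continuous jap := by
        have h2 : Continuous fun s : ℝ => 1 + s^2 := continuous_const.add (continuous_pow 2)
        exact Real.continuous_sqrt.comp h2
      exact hjapc.comp h1
    · exact η₀.continuous.comp (((hTc.comp
        (continuous_sub_right (r • T.symm (intVec j)))).const_smul r⁻¹) : Continuous fun x : Rn n =>
          r⁻¹ • T (x - r • T.symm (intVec j)))
  have hgm : AEMeasurable g volume := hg.aestronglyMeasurable.aemeasurable
  have hFm : ∀ j, AEMeasurable (fun x => ((W j x : ℝ) : ℂ) * g x) volume :=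
    fun j => ((Complex.continuous_ofReal.comp (hWc j)).aemeasurable).mul hgm
  have hmeas : ∀ j, AEMeasurable
      (fun x => (‖((W j x : ℝ) : ℂ) * g x‖₊ : ℝ≥0∞) ^ 2) volume :=
    fun j => (hFm j).enorm.pow_const 2
  -- pointwise sum bound
  have pointwise : ∀ x : Rn n,
      ∑' j : Fin n → ℤ, ENNReal.ofReal ((W j x)^2) ≤ Z := by
    intro x
    set y : Rn n := r⁻¹ • T x with hy
    have harg : ∀ j : Fin n → ℤ,
        r⁻¹ • T (x - r • T.symm (intVec j)) = y - intVec j := by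
      intro j
      rw [map_sub, _root_.map_smul, T.apply_symm_apply, smul_sub, smul_smul,
        inv_mul_cancel₀ (ne_of_gt hr), one_smul, hy]
    have hnorm : ∀ j : Fin n → ℤ,
        ‖x - r • T.symm (intVec j)‖ / r = ‖T.symm (y - intVec j)‖ := by
      intro j
      have hx : x - r • T.symm (intVec j) = r • T.symm (y - intVec j) := by
        calc x - r • T.symm (intVec j)
            = T.symm (T (x - r • T.symm (intVec j))) := (T.symm_apply_apply _).symm
          _ = T.symm (r • (r⁻¹ • T (x - r • T.symm (intVec j)))) := by
              rw [smul_smul, mul_inv_cancel₀ (ne_of_gt hr), one_smul]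
          _ = r • T.symm (y - intVec j) := by rw [harg j, _root_.map_smul]
      rw [hx, norm_smul, Real.norm_eq_abs, abs_of_pos hr,
        mul_div_cancel_left₀ _ (ne_of_gt hr)]
    have hWj : ∀ j : Fin n → ℤ, W j x =
        jap ‖T.symm (y - intVec j)‖ ^ N * η₀ (y - intVec j) := by
      intro j
      rw [hWdef]
      simp only
      rw [hnorm j, harg j]
    have happ : ∀ (j : Fin n → ℤ) (i : Fin n),
        (y - intVec j) i = y i - (j i : ℝ) := fun j i => rfl
    calc ∑' j : Fin n → ℤ, ENNReal.ofReal ((W j x)^2)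
        ≤ ∑' j : Fin n → ℤ, ENNReal.ofReal
            (A^2 * ∏ i : Fin n, (1 / (1 + (y i - (j i : ℝ))^2))) := by
          apply ENNReal.tsum_le_tsum
          intro j
          apply ENNReal.ofReal_le_ofReal
          rw [hWj j]
          have := key2 (y - intVec j)
          simp only [happ j] at this
          exact this
      _ = ∑' j : Fin n → ℤ, ENNReal.ofReal (A^2) *
            ∏ i : Fin n, ENNReal.ofReal (1 / (1 + (y i - (j i : ℝ))^2)) := by
          congr 1; funext j
          rw [ENNReal.ofReal_mul (by positivity),
            ENNReal.ofReal_prod_of_nonneg (fun i _ => by positivity)]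
      _ = ENNReal.ofReal (A^2) * ∑' j : Fin n → ℤ,
            ∏ i : Fin n, ENNReal.ofReal (1 / (1 + (y i - (j i : ℝ))^2)) :=
          ENNReal.tsum_mul_left
      _ = ENNReal.ofReal (A^2) * ∏ i : Fin n,
            ∑' m : ℤ, ENNReal.ofReal (1 / (1 + (y i - (m : ℝ))^2)) := by
          rw [tsum_pi_prod n (fun i m => ENNReal.ofReal (1 / (1 + (y i - (m:ℝ))^2)))]
      _ ≤ ENNReal.ofReal (A^2) * ∏ _i : Fin n, (2 * S2) := by
          apply mul_le_mul_right
          exact Finset.prod_le_prod' fun i _ => one_dim_bound (y i)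
      _ = Z := by
          rw [Finset.prod_const, Finset.card_univ, Fintype.card_fin]
  -- main chain
  calc ∑' j : Fin n → ℤ, eLpNorm (fun x => ((W j x : ℝ) : ℂ) * g x) 2 volume ^ 2
      = ∑' j : Fin n → ℤ, ∫⁻ x, (‖((W j x : ℝ) : ℂ) * g x‖₊ : ℝ≥0∞)^2 := by
        congr 1; funext j; exact eLpNorm_two_sq volume _
    _ = ∫⁻ x, ∑' j : Fin n → ℤ, (‖((W j x : ℝ) : ℂ) * g x‖₊ : ℝ≥0∞)^2 :=
        (lintegral_tsum hmeas).symm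
    _ ≤ ∫⁻ x, ENNReal.ofReal C * (‖g x‖₊ : ℝ≥0∞)^2 := by
        apply lintegral_mono
        intro x
        have hterm : ∀ j, (‖((W j x : ℝ) : ℂ) * g x‖₊ : ℝ≥0∞)^2
            = ENNReal.ofReal ((W j x)^2) * (‖g x‖₊ : ℝ≥0∞)^2 := by
          intro j
          rw [nnnorm_mul, ENNReal.coe_mul, mul_pow, Complex.nnnorm_real,
            ← enorm_eq_nnnorm (W j x), Real.enorm_eq_ofReal (hW0 j x), ← ENNReal.ofReal_pow (hW0 j x)]
        calc ∑' j, (‖((W j x : ℝ) : ℂ) * g x‖₊ : ℝ≥0∞)^2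
            = (∑' j, ENNReal.ofReal ((W j x)^2)) * (‖g x‖₊ : ℝ≥0∞)^2 := by
              simp only [hterm]; exact ENNReal.tsum_mul_right
          _ ≤ ENNReal.ofReal C * (‖g x‖₊ : ℝ≥0∞)^2 :=
              mul_le_mul_left ((pointwise x).trans hZC) _
    _ = ENNReal.ofReal C * ∫⁻ x, (‖g x‖₊ : ℝ≥0∞)^2 :=
        lintegral_const_mul' _ _ ENNReal.ofReal_ne_top
    _ = ENNReal.ofReal C * eLpNorm g 2 volume ^ 2 := by
        rw [eLpNorm_two_sq volume g]

end PaperStmt
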